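/- Let s = (s_1,...,s_n) be a composition of positive integers. The set of Stirling s-permutations is in bijection with tuples of integers (f_1, ..., f_{n-1}) where 0 ≤ f_i ≤ s_n + s_{n-1} + ··· + s_{i+1} for each i ∈ {1,...,n-1}: given a Stirling s-permutation w, set f_i to be the number of letters strictly greater than i occurring before the i-block of w. -/

import Mathlib

namespace SPermutahedron

/-! ### Stirling `s`-permutations -/

/-- A word avoids the pattern `121`: there is never a letter `j` strictly in
between two occurrences of a letter `i` with `i < j`. -/
def Avoids121 (w : List ℕ) : Prop :=
  ¬ ∃ (u₁ u₂ u₃ u₄ : List ℕ) (i j : ℕ), i < j ∧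
      w = u₁ ++ i :: u₂ ++ j :: u₃ ++ i :: u₄

/-- A Stirling `s`-permutation: a permutation of the word `1^{s 1} 2^{s 2} ⋯ n^{s n}`
avoiding the pattern `121`. -/
def IsStirling (s : ℕ → ℕ) (n : ℕ) (w : List ℕ) : Prop :=
  (∀ x ∈ w, 1 ≤ x ∧ x ≤ n) ∧ (∀ i, 1 ≤ i → i ≤ n → w.count i = s i) ∧ Avoids121 w

/-- `(a, c)` is an ascent of `w`: `a < c` and `ac` is a consecutive substring. -/
def WordAscent (w : List ℕ) (a c : ℕ) : Prop :=
  a < c ∧ ∃ u v, w = u ++ a :: c :: v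

/-- `(a, c)` is a descent of `w`: `a < c` and `ca` is a consecutive substring. -/
def WordDescent (w : List ℕ) (a c : ℕ) : Prop :=
  a < c ∧ ∃ u v, w = u ++ c :: a :: v

/-- The inversion multiplicity `#_w(c, a)`: the number of occurrences of `c`
preceding the `a`-block of `w` (i.e. preceding the first occurrence of `a`). -/
def invW (w : List ℕ) (c a : ℕ) : ℕ := (w.takeWhile (fun x => decide (x ≠ a))).count c

/-- sublist-based avoidance -/
def Av (w : List ℕ) : Prop := ∀ i j : ℕ, i < j → ¬ (List.Sublist [i, j, i] w)

lemma sub2_exists {b c : ℕ} {w : List ℕ} (h : List.Sublist [b, c] w) :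
    ∃ u2 u3, w = u2 ++ b :: u3 ∧ c ∈ u3 := by
  induction w with
  | nil => simp at h
  | cons x t ih =>
    rcases h with _ | ⟨h⟩ | ⟨h⟩
    · rcases ih ‹_› with ⟨u2, u3, rfl, hc⟩
      exact ⟨x :: u2, u3, rfl, hc⟩
    · exact ⟨[], t, rfl, List.singleton_sublist.mp (by assumption)⟩

lemma sub3_exists {a b c : ℕ} {w : List ℕ} (h : List.Sublist [a, b, c] w) :
    ∃ u1 u2 u3 u4, w = u1 ++ a :: u2 ++ b :: u3 ++ c :: u4 := by
  induction w with
  | nil => simp at h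
  | cons x t ih =>
    rcases h with _ | ⟨h⟩ | ⟨h⟩
    · rcases ih ‹_› with ⟨u1, u2, u3, u4, rfl⟩
      exact ⟨x :: u1, u2, u3, u4, rfl⟩
    · rcases sub2_exists ‹List.Sublist [b, c] t› with ⟨u2, u3, rfl, hc⟩
      rcases List.append_of_mem hc with ⟨u3', u4, rfl⟩
      exact ⟨[], u2, u3', u4, by simp⟩

lemma avoids_iff_av (w : List ℕ) : Avoids121 w ↔ Av w := by
  constructor
  · intro h i j hij hsub
    rcases sub3_exists hsub with ⟨u1, u2, u3, u4, rfl⟩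
    exact h ⟨u1, u2, u3, u4, i, j, hij, rfl⟩
  · rintro h ⟨u1, u2, u3, u4, i, j, hij, rfl⟩
    refine h i j hij ?_
    have h1 : List.Sublist [i] (u3 ++ i :: u4) := (List.singleton_sublist).mpr (by simp)
    have h2 : List.Sublist [j, i] (j :: u3 ++ i :: u4) := h1.cons₂ j
    have h3 : List.Sublist [j, i] (u2 ++ j :: u3 ++ i :: u4) := by
      simpa using h2.trans (List.sublist_append_right u2 _)
    have h4 : List.Sublist [i, j, i] (i :: (u2 ++ j :: u3 ++ i :: u4)) := h3.cons₂ i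
    simpa using h4.trans (List.sublist_append_right u1 _)

lemma Av.sublist {w l : List ℕ} (h : Av w) (hl : List.Sublist l w) : Av l :=
  fun i j hij hs => h i j hij (hs.trans hl)


def code (w : List ℕ) (a : ℕ) : ℕ :=
  ((w.takeWhile (fun x => decide (x ≠ a))).filter (fun x => decide (a < x))).length

lemma Av.tail {x : ℕ} {t : List ℕ} (h : Av (x :: t)) : Av t :=
  h.sublist (List.sublist_cons_self x t)

lemma run_lemma {a : ℕ} : ∀ t : List ℕ, Av (a :: t) → (∀ x ∈ t, a ≤ x) →
    ∃ v, t = List.replicate (t.count a) a ++ v ∧ a ∉ v := by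
  intro t
  induction t with
  | nil => exact fun _ _ => ⟨[], by simp⟩
  | cons y t' ih =>
    intro hav hle
    by_cases hy : y = a
    · subst hy
      have hav' : Av (y :: t') := hav.tail
      rcases ih hav' (fun x hx => hle x (by simp [hx])) with ⟨v, hv, hnv⟩
      refine ⟨v, ?_, hnv⟩
      rw [List.count_cons_self, List.replicate_succ]
      simpa using hv
    · have hat : a ∉ t' := by
        intro hin
        have hya : a < y := lt_of_le_of_ne (hle y (by simp)) (Ne.symm hy)
        refine hav a y hya ?_
        have h1 : List.Sublist [a] t' := List.singleton_sublist.mpr hin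
        have h2 : List.Sublist [y, a] (y :: t') := h1.cons₂ y
        exact h2.cons₂ a
      refine ⟨y :: t', ?_, by simp [hy, hat, Ne.symm hy]⟩
      have : (y :: t').count a = 0 := by
        simp [List.count_eq_zero, hy, hat]
      simp [this]

lemma block_decomp {a : ℕ} : ∀ w : List ℕ, Av w → (∀ x ∈ w, a ≤ x) → a ∈ w →
    ∃ u v, w = u ++ List.replicate (w.count a) a ++ v ∧ a ∉ u ∧ a ∉ v := by
  intro w
  induction w with
  | nil => simp
  | cons x t ih =>
    intro hav hle hmem
    by_cases hx : x = a
    · subst hx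
      rcases run_lemma t hav (fun y hy => hle y (by simp [hy])) with ⟨v, hv, hnv⟩
      refine ⟨[], v, ?_, by simp, hnv⟩
      rw [List.count_cons_self, List.replicate_succ]
      simpa using hv
    · have hmem' : a ∈ t := by rw [List.mem_cons] at hmem; exact hmem.resolve_left (fun h => hx h.symm)
      rcases ih hav.tail (fun y hy => hle y (by simp [hy])) hmem' with ⟨u, v, ht, hnu, hnv⟩
      refine ⟨x :: u, v, ?_, by simp [hnu]; exact fun h => hx h.symm, hnv⟩
      have hc : (x :: t).count a = t.count a := by
        rw [List.count_cons]; simp [hx]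
      rw [hc]; simpa using ht

lemma takeWhile_append_all {p : ℕ → Bool} {u z : List ℕ} (h : ∀ x ∈ u, p x = true) :
    (u ++ z).takeWhile p = u ++ z.takeWhile p := by
  induction u with
  | nil => simp
  | cons x t ih =>
    have hx := h x (by simp)
    simp only [List.cons_append, List.takeWhile_cons, hx, if_true]
    rw [ih (fun y hy => h y (by simp [hy]))]

lemma takeWhile_append_stop {p : ℕ → Bool} {u z : List ℕ} (h : ∃ x ∈ u, p x = false) :
    (u ++ z).takeWhile p = u.takeWhile p := by
  induction u with
  | nil => simp at h
  | cons x t ih =>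
    by_cases hx : p x
    · simp only [List.cons_append, List.takeWhile_cons, hx, if_true]
      refine congrArg _ (ih ?_)
      rcases h with ⟨y, hy, hpy⟩
      rcases List.mem_cons.mp hy with rfl | hy'
      · rw [hx] at hpy; simp at hpy
      · exact ⟨y, hy', hpy⟩
    · simp only [List.cons_append, List.takeWhile_cons, Bool.not_eq_true] at hx ⊢
      rw [hx]; simp

/-- code at the inserted letter -/
lemma code_self {a k : ℕ} {u v : List ℕ} (hk : 1 ≤ k) (hu : ∀ x ∈ u, a < x) :
    code (u ++ List.replicate k a ++ v) a = u.length := by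
  obtain ⟨k', rfl⟩ : ∃ k', k = k' + 1 := ⟨k - 1, by omega⟩
  unfold code
  rw [List.append_assoc, takeWhile_append_all (fun x hx => by simp; exact (hu x hx).ne')]
  rw [List.replicate_succ, List.cons_append, List.takeWhile_cons,
    if_neg (by simp : ¬ ((fun x => decide (x ≠ a)) a = true)), List.append_nil]
  rw [List.filter_eq_self.mpr (fun x hx => by simpa using hu x hx)]

/-- code at other letters -/
lemma code_other {a b k : ℕ} {u v : List ℕ} (hab : a < b) (hbv : b ∈ u ∨ b ∈ v) :
    code (u ++ List.replicate k a ++ v) b = code (u ++ v) b := by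
  unfold code
  by_cases hbu : b ∈ u
  · rw [List.append_assoc, takeWhile_append_stop ⟨b, hbu, by simp⟩,
      takeWhile_append_stop ⟨b, hbu, by simp⟩]
  · have hbv' : b ∈ v := hbv.resolve_left hbu
    have hu : ∀ x ∈ u, (fun x => decide (x ≠ b)) x = true := fun x hx => by
      simp; exact fun h => hbu (h ▸ hx)
    rw [List.append_assoc, takeWhile_append_all hu, takeWhile_append_all
      (fun x hx => by simp; intro h; subst h; exact absurd (List.eq_of_mem_replicate hx) (by omega)),
      takeWhile_append_all hu]
    simp only [List.filter_append, List.length_append]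
    have : (List.replicate k a).filter (fun x => decide (b < x)) = [] := by
      apply List.filter_eq_nil_iff.mpr
      intro x hx
      rw [List.eq_of_mem_replicate hx]
      simp; omega
    rw [this]
    simp

lemma code_top {n : ℕ} {w : List ℕ} (h : ∀ x ∈ w, x ≤ n) : code w n = 0 := by
  unfold code
  rw [List.length_eq_zero_iff, List.filter_eq_nil_iff]
  intro x hx
  have hxw : x ∈ w := (List.takeWhile_sublist _).subset hx
  have := h x hxw
  simp; omega

lemma length_eq_sum_count {m n : ℕ} : ∀ w : List ℕ, (∀ x ∈ w, m < x ∧ x ≤ n) →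
    w.length = ∑ r ∈ Finset.Icc (m + 1) n, w.count r := by
  intro w
  induction w with
  | nil => simp
  | cons x t ih =>
    intro h
    have hx := h x (by simp)
    have hxm : x ∈ Finset.Icc (m + 1) n := by simp; omega
    simp only [List.length_cons, List.count_cons]
    have hsum : (∑ r ∈ Finset.Icc (m+1) n, if (x == r) = true then 1 else 0) = 1 := by
      simp only [beq_iff_eq]; rw [Finset.sum_ite_eq]; simp [hxm]
    rw [Finset.sum_add_distrib, hsum, ih (fun y hy => h y (by simp [hy]))]

lemma filter_length_eq_sum_count {a n : ℕ} : ∀ w : List ℕ, (∀ x ∈ w, x ≤ n) →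
    (w.filter (fun x => decide (a < x))).length = ∑ r ∈ Finset.Icc (a + 1) n, w.count r := by
  intro w
  induction w with
  | nil => simp
  | cons x t ih =>
    intro h
    have hx := h x (by simp)
    have ihx := ih (fun y hy => h y (by simp [hy]))
    by_cases hax : a < x
    · have hxm : x ∈ Finset.Icc (a + 1) n := by simp; omega
      rw [List.filter_cons_of_pos (by simpa using hax)]
      simp only [List.length_cons, List.count_cons]
      have hsum : (∑ r ∈ Finset.Icc (a+1) n, if (x == r) = true then 1 else 0) = 1 := by
        simp only [beq_iff_eq]; rw [Finset.sum_ite_eq]; simp [hxm]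
      rw [Finset.sum_add_distrib, hsum, ihx]
    · have hxm : x ∉ Finset.Icc (a + 1) n := by simp; omega
      rw [List.filter_cons_of_neg (by simpa using hax)]
      simp only [List.count_cons]
      have hsum : (∑ r ∈ Finset.Icc (a+1) n, if (x == r) = true then 1 else 0) = 0 := by
        simp only [beq_iff_eq]; rw [Finset.sum_ite_eq]; simp [hxm]
      rw [Finset.sum_add_distrib, hsum, ihx]
      simp

lemma av_insert {a k : ℕ} {u v : List ℕ} (hgt : ∀ x ∈ u ++ v, a < x)
    (hav : Av (u ++ v)) : Av (u ++ List.replicate k a ++ v) := by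
  intro i j hij hsub
  have hmemi : i ∈ u ++ List.replicate k a ++ v := hsub.subset (by simp)
  have hmemj : j ∈ u ++ List.replicate k a ++ v := hsub.subset (by simp)
  have hcases : ∀ x ∈ u ++ List.replicate k a ++ v, x = a ∨ a < x := by
    intro x hx
    simp only [List.mem_append] at hx
    rcases hx with (hx | hx) | hx
    · exact Or.inr (hgt x (by simp [hx]))
    · exact Or.inl (List.eq_of_mem_replicate hx)
    · exact Or.inr (hgt x (by simp [hx]))
  rcases hcases i hmemi with hia | hia
  · subst hia
    -- i = a : impossible, both a's would have to lie in the replicate block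
    have hja : i < j := hij
    rw [List.append_assoc, List.sublist_append_iff] at hsub
    obtain ⟨l1, l2, heq, hl1, hl2⟩ := hsub
    have hl1nil : l1 = [] := by
      cases l1 with
      | nil => rfl
      | cons y t =>
        exfalso
        have hy : i = y := by
          simp only [List.cons_append, List.cons.injEq] at heq
          exact heq.1
        have hyu : i ∈ u := hl1.subset (by simp [hy])
        exact absurd (hgt i (List.mem_append_left _ hyu)) (lt_irrefl i)
    subst hl1nil
    simp only [List.nil_append] at heq
    subst heq
    rw [List.sublist_append_iff] at hl2
    obtain ⟨p, q, heq, hp, hq⟩ := hl2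
    have hpa : ∀ x ∈ p, x = i := fun x hx => List.eq_of_mem_replicate (hp.subset hx)
    have hqv : ∀ x ∈ q, i < x := fun x hx => hgt x (List.mem_append_right _ (hq.subset hx))
    rcases p with _ | ⟨x, _ | ⟨y, _ | ⟨z, rest⟩⟩⟩
    · simp only [List.nil_append] at heq
      exact absurd (hqv i (by rw [← heq]; simp)) (lt_irrefl i)
    · simp only [List.cons_append, List.cons.injEq] at heq
      obtain ⟨rfl, heq2⟩ := heq
      simp only [List.nil_append] at heq2
      exact absurd (hqv i (by rw [← heq2]; simp)) (lt_irrefl i)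
    · simp only [List.cons_append, List.cons.injEq] at heq
      obtain ⟨rfl, rfl, heq3⟩ := heq
      exact absurd (hpa j (by simp)) (by omega)
    · simp only [List.cons_append, List.cons.injEq] at heq
      obtain ⟨rfl, rfl, rfl, heq4⟩ := heq
      exact absurd (hpa j (by simp)) (by omega)
  · rcases hcases j hmemj with rfl | hja
    · omega
    · -- both > a : pattern survives deleting the block
      have hne : ∀ x ∈ ([i, j, i] : List ℕ), (fun x => decide (x ≠ a)) x = true := by
        intro x hx
        simp only [List.mem_cons] at hx
        simp only [decide_eq_true_eq]
        rcases hx with rfl | rfl | rfl | h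
        · omega
        · omega
        · omega
        · simp at h
      have hfil := hsub.filter (fun x => decide (x ≠ a))
      rw [List.filter_eq_self.mpr hne] at hfil
      have hrepl : (List.replicate k a).filter (fun x => decide (x ≠ a)) = [] := by
        apply List.filter_eq_nil_iff.mpr
        intro x hx
        rw [List.eq_of_mem_replicate hx]; simp
      rw [List.filter_append, List.filter_append, hrepl] at hfil
      rw [List.filter_eq_self.mpr (fun x hx => by simpa using (hgt x (by simp [hx])).ne'),
        List.filter_eq_self.mpr (fun x hx => by simpa using (hgt x (by simp [hx])).ne')] at hfil
      exact hav i j hij (by simpa using hfil)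

def IsSt (m n : ℕ) (s : ℕ → ℕ) (w : List ℕ) : Prop :=
  (∀ x ∈ w, m < x ∧ x ≤ n) ∧ (∀ a, m < a → a ≤ n → w.count a = s a) ∧ Av w

lemma st_inj (n : ℕ) (s : ℕ → ℕ) : ∀ k m, n - m = k →
    (∀ a, m < a → a ≤ n → 1 ≤ s a) →
    ∀ w w', IsSt m n s w → IsSt m n s w' →
    (∀ a, m < a → a ≤ n → code w a = code w' a) → w = w' := by
  intro k
  induction k with
  | zero =>
    intro m hm _ w w' hw hw' _
    have h1 : w = [] := by
      cases w with
      | nil => rfl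
      | cons x t => exact absurd (hw.1 x (by simp)) (by omega)
    have h2 : w' = [] := by
      cases w' with
      | nil => rfl
      | cons x t => exact absurd (hw'.1 x (by simp)) (by omega)
    rw [h1, h2]
  | succ k ih =>
    intro m hm hs w w' hw hw' hcode
    set a := m + 1 with ha
    have han : a ≤ n := by omega
    have hsa : 1 ≤ s a := hs a (by omega) han
    -- decompose w
    have hmemw : a ∈ w := by
      rw [← List.count_pos_iff]
      rw [hw.2.1 a (by omega) han]; omega
    have hmemw' : a ∈ w' := by
      rw [← List.count_pos_iff]
      rw [hw'.2.1 a (by omega) han]; omega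
    obtain ⟨u, v, hweq, hnu, hnv⟩ :=
      block_decomp w hw.2.2 (fun x hx => by have := hw.1 x hx; omega) hmemw
    obtain ⟨u', v', hweq', hnu', hnv'⟩ :=
      block_decomp w' hw'.2.2 (fun x hx => by have := hw'.1 x hx; omega) hmemw'
    rw [hw.2.1 a (by omega) han] at hweq
    rw [hw'.2.1 a (by omega) han] at hweq'
    have hugt : ∀ x ∈ u, a < x := by
      intro x hx
      have hxw : x ∈ w := by rw [hweq]; simp [hx]
      have := hw.1 x hxw
      have : x ≠ a := fun h => hnu (h ▸ hx)
      omega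
    have hvgt : ∀ x ∈ v, a < x := by
      intro x hx
      have hxw : x ∈ w := by rw [hweq]; simp [hx]
      have := hw.1 x hxw
      have : x ≠ a := fun h => hnv (h ▸ hx)
      omega
    have hugt' : ∀ x ∈ u', a < x := by
      intro x hx
      have hxw : x ∈ w' := by rw [hweq']; simp [hx]
      have := hw'.1 x hxw
      have : x ≠ a := fun h => hnu' (h ▸ hx)
      omega
    have hvgt' : ∀ x ∈ v', a < x := by
      intro x hx
      have hxw : x ∈ w' := by rw [hweq']; simp [hx]
      have := hw'.1 x hxw
      have : x ≠ a := fun h => hnv' (h ▸ hx)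
      omega
    -- equal block positions
    have hlen : u.length = u'.length := by
      have h1 : code w a = u.length := by rw [hweq]; exact code_self hsa hugt
      have h2 : code w' a = u'.length := by rw [hweq']; exact code_self hsa hugt'
      rw [← h1, ← h2]; exact hcode a (by omega) han
    -- the reduced words are Stirling on (m+1, n]
    have hsubw : List.Sublist (u ++ v) w := by
      rw [hweq, List.append_assoc]
      exact (List.Sublist.refl u).append (List.sublist_append_right _ _)
    have hsubw' : List.Sublist (u' ++ v') w' := by
      rw [hweq', List.append_assoc]
      exact (List.Sublist.refl u').append (List.sublist_append_right _ _)
    have hcount : ∀ b, a < b → b ≤ n → (u ++ v).count b = s b := by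
      intro b hab hbn
      have := hw.2.1 b (by omega) hbn
      rw [hweq] at this
      simp only [List.count_append, List.count_replicate] at this ⊢
      rw [if_neg (by simp; omega)] at this
      omega
    have hcount' : ∀ b, a < b → b ≤ n → (u' ++ v').count b = s b := by
      intro b hab hbn
      have := hw'.2.1 b (by omega) hbn
      rw [hweq'] at this
      simp only [List.count_append, List.count_replicate] at this ⊢
      rw [if_neg (by simp; omega)] at this
      omega
    have hst : IsSt a n s (u ++ v) := by
      refine ⟨?_, hcount, hw.2.2.sublist hsubw⟩
      intro x hx
      rcases List.mem_append.mp hx with h | h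
      · exact ⟨hugt x h, (hw.1 x (hsubw.subset hx)).2⟩
      · exact ⟨hvgt x h, (hw.1 x (hsubw.subset hx)).2⟩
    have hst' : IsSt a n s (u' ++ v') := by
      refine ⟨?_, hcount', hw'.2.2.sublist hsubw'⟩
      intro x hx
      rcases List.mem_append.mp hx with h | h
      · exact ⟨hugt' x h, (hw'.1 x (hsubw'.subset hx)).2⟩
      · exact ⟨hvgt' x h, (hw'.1 x (hsubw'.subset hx)).2⟩
    have hcode2 : ∀ b, a < b → b ≤ n → code (u ++ v) b = code (u' ++ v') b := by
      intro b hab hbn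
      have hmem1 : b ∈ u ++ v := by
        rw [← List.count_pos_iff, hcount b hab hbn]; exact hs b (by omega) hbn
      have hmem2 : b ∈ u' ++ v' := by
        rw [← List.count_pos_iff, hcount' b hab hbn]; exact hs b (by omega) hbn
      have e1 : code w b = code (u ++ v) b := by
        rw [hweq]; exact code_other hab (List.mem_append.mp hmem1)
      have e2 : code w' b = code (u' ++ v') b := by
        rw [hweq']; exact code_other hab (List.mem_append.mp hmem2)
      rw [← e1, ← e2]; exact hcode b (by omega) hbn
    have := ih a (by omega) (fun b hb1 hb2 => hs b (by omega) hb2)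
      (u ++ v) (u' ++ v') hst hst' hcode2
    obtain ⟨rfl, rfl⟩ := List.append_inj this hlen
    rw [hweq, hweq']

lemma st_surj (n : ℕ) (s : ℕ → ℕ) : ∀ k m, n - m = k →
    (∀ a, m < a → a ≤ n → 1 ≤ s a) →
    ∀ f : ℕ → ℕ, (∀ a, m < a → a ≤ n → f a ≤ ∑ r ∈ Finset.Icc (a + 1) n, s r) →
    ∃ w, IsSt m n s w ∧ ∀ a, m < a → a ≤ n → code w a = f a := by
  intro k
  induction k with
  | zero =>
    intro m hm _ f _
    refine ⟨[], ⟨by simp, fun a ha1 ha2 => by exfalso; omega, ?_⟩, fun a ha1 ha2 => by exfalso; omega⟩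
    intro i j hij hsub
    simp at hsub
  | succ k ih =>
    intro m hm hs f hf
    set a := m + 1 with ha
    have han : a ≤ n := by omega
    have hsa : 1 ≤ s a := hs a (by omega) han
    obtain ⟨w₀, hst₀, hcode₀⟩ := ih a (by omega) (fun b hb1 hb2 => hs b (by omega) hb2)
      f (fun b hb1 hb2 => hf b (by omega) hb2)
    have hgt₀ : ∀ x ∈ w₀, a < x := fun x hx => (hst₀.1 x hx).1
    have hlen₀ : w₀.length = ∑ r ∈ Finset.Icc (a + 1) n, s r := by
      rw [length_eq_sum_count w₀ hst₀.1]
      exact Finset.sum_congr rfl (fun r hr => by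
        have := Finset.mem_Icc.mp hr
        exact hst₀.2.1 r (by omega) this.2)
    have hfa : f a ≤ w₀.length := by rw [hlen₀]; exact hf a (by omega) han
    set u := w₀.take (f a) with hu
    set v := w₀.drop (f a) with hv
    have huv : u ++ v = w₀ := List.take_append_drop _ _
    have hugt : ∀ x ∈ u, a < x := fun x hx => hgt₀ x (by rw [← huv]; simp [hx])
    have hvgt : ∀ x ∈ v, a < x := fun x hx => hgt₀ x (by rw [← huv]; simp [hx])
    have hguv : ∀ x ∈ u ++ v, a < x := by rw [huv]; exact hgt₀
    refine ⟨u ++ List.replicate (s a) a ++ v, ⟨?_, ?_, av_insert hguv (huv ▸ hst₀.2.2)⟩, ?_⟩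
    · intro x hx
      simp only [List.mem_append, List.mem_replicate] at hx
      rcases hx with (hx | hx) | hx
      · have := hst₀.1 x (by rw [← huv]; simp [hx]); omega
      · omega
      · have := hst₀.1 x (by rw [← huv]; simp [hx]); omega
    · intro b hb1 hb2
      have hc0 : w₀.count b = (u ++ v).count b := by rw [huv]
      by_cases hba : b = a
      · have haw₀ : w₀.count a = 0 := by
          rw [List.count_eq_zero]
          intro hmem
          exact absurd (hgt₀ a hmem) (lt_irrefl a)
        rw [hba] at hc0 ⊢
        rw [List.count_append] at hc0
        simp only [List.count_append, List.count_replicate, beq_self_eq_true, if_true]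
        omega
      · have hab : a < b := by omega
        have hsb := hst₀.2.1 b (by omega) hb2
        rw [hc0, List.count_append] at hsb
        simp only [List.count_append, List.count_replicate,
          if_neg (show ¬ ((a == b) = true) by simp [beq_iff_eq]; exact fun h => hba h.symm)]
        omega
    · intro b hb1 hb2
      by_cases hba : b = a
      · rw [hba, code_self hsa hugt]
        rw [hu, List.length_take]
        omega
      · have hab : a < b := by omega
        have hbmem : b ∈ u ++ v := by
          rw [huv, ← List.count_pos_iff, hst₀.2.1 b (by omega) hb2]
          exact hs b (by omega) hb2
        rw [code_other hab (List.mem_append.mp hbmem), huv]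
        exact hcode₀ b (by omega) hb2

lemma code_le {n a : ℕ} {s : ℕ → ℕ} {w : List ℕ} (hmem : ∀ x ∈ w, x ≤ n)
    (hcnt : ∀ r, a < r → r ≤ n → w.count r = s r) :
    code w a ≤ ∑ r ∈ Finset.Icc (a + 1) n, s r := by
  have h1 : code w a ≤ (w.filter (fun x => decide (a < x))).length :=
    ((List.takeWhile_sublist _).filter _).length_le
  rw [filter_length_eq_sum_count w hmem] at h1
  refine h1.trans (le_of_eq (Finset.sum_congr rfl (fun r hr => ?_)))
  have := Finset.mem_Icc.mp hr
  exact hcnt r (by omega) this.2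

lemma isStirling_iff_isSt {n : ℕ} {s : ℕ → ℕ} {w : List ℕ} :
    IsStirling s n w ↔ IsSt 0 n s w := by
  unfold IsStirling IsSt
  rw [avoids_iff_av]
  constructor
  · exact fun h => ⟨fun x hx => h.1 x hx, fun a h1 h2 => h.2.1 a h1 h2, h.2.2⟩
  · exact fun h => ⟨fun x hx => h.1 x hx, fun a h1 h2 => h.2.1 a h1 h2, h.2.2⟩


/-- For a composition `s` of positive integers, the map
sending a Stirling `s`-permutation `w` to the tuple `(f₁, …, f_{n-1})`, where
`f_i` is the number of letters strictly greater than `i` occurring before the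
`i`-block of `w` (i.e. before the first occurrence of `i`), is a bijection onto
the set of tuples with `0 ≤ f_i ≤ s_n + s_{n-1} + ⋯ + s_{i+1}` for all
`i ∈ {1, …, n-1}`.  (Here the `i`-th coordinate, for `i : Fin (n-1)`,
corresponds to the letter `i+1`.) -/
theorem stirling_bij_tuples (n : ℕ) (s : ℕ → ℕ)
    (hs : ∀ i, 1 ≤ i → i ≤ n → 1 ≤ s i) :
    Set.BijOn
      (fun w : {w : List ℕ // IsStirling s n w} => fun i : Fin (n - 1) =>
        ((w.1.takeWhile (fun x => decide (x ≠ (i : ℕ) + 1))).filter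
          (fun x => decide ((i : ℕ) + 1 < x))).length)
      Set.univ
      {f : Fin (n - 1) → ℕ | ∀ i : Fin (n - 1),
        f i ≤ ∑ r ∈ Finset.Icc ((i : ℕ) + 2) n, s r} := by
  have hs' : ∀ a, 0 < a → a ≤ n → 1 ≤ s a := fun a h1 h2 => hs a h1 h2
  refine ⟨?_, ?_, ?_⟩
  · -- MapsTo
    intro w _
    intro i
    have hmem : ∀ x ∈ w.1, x ≤ n := fun x hx => ((isStirling_iff_isSt.mp w.2).1 x hx).2
    have hcnt : ∀ r, (i : ℕ) + 1 < r → r ≤ n → w.1.count r = s r := fun r h1 h2 =>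
      (isStirling_iff_isSt.mp w.2).2.1 r (by omega) h2
    have := code_le (a := (i : ℕ) + 1) hmem hcnt
    have h2 : (i : ℕ) + 1 + 1 = (i : ℕ) + 2 := by omega
    rw [h2] at this
    exact this
  · -- InjOn
    intro w _ w' _ heq
    apply Subtype.ext
    refine st_inj n s n 0 (by omega) hs' w.1 w'.1
      (isStirling_iff_isSt.mp w.2) (isStirling_iff_isSt.mp w'.2) ?_
    intro b hb1 hbn
    by_cases hb : b = n
    · subst hb
      rw [code_top (fun x hx => ((isStirling_iff_isSt.mp w.2).1 x hx).2),
        code_top (fun x hx => ((isStirling_iff_isSt.mp w'.2).1 x hx).2)]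
    · have hblt : b < n := by omega
      have hfin : b - 1 < n - 1 := by omega
      have hkey := congrFun heq ⟨b - 1, hfin⟩
      simp only at hkey
      have hb1' : b - 1 + 1 = b := by omega
      rw [hb1'] at hkey
      exact hkey
  · -- SurjOn
    intro g hg
    set F : ℕ → ℕ := fun b => if hb : 1 ≤ b ∧ b < n then g ⟨b - 1, by omega⟩ else 0 with hF
    have hFbound : ∀ a, 0 < a → a ≤ n → F a ≤ ∑ r ∈ Finset.Icc (a + 1) n, s r := by
      intro a h1 h2
      by_cases hcond : 1 ≤ a ∧ a < n
      · rw [hF]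
        simp only [dif_pos hcond]
        have := hg ⟨a - 1, by omega⟩
        simp only [Set.mem_setOf_eq] at this
        have h3 : a - 1 + 2 = a + 1 := by omega
        rw [h3] at this
        exact this
      · rw [hF]; simp only [dif_neg hcond]; exact Nat.zero_le _
    obtain ⟨w, hst, hcode⟩ := st_surj n s n 0 (by omega) hs' F hFbound
    refine ⟨⟨w, isStirling_iff_isSt.mpr hst⟩, trivial, ?_⟩
    funext i
    have h1 : (0 : ℕ) < (i : ℕ) + 1 := by omega
    have h2 : (i : ℕ) + 1 ≤ n := by have := i.2; omega
    have := hcode ((i : ℕ) + 1) h1 h2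
    simp only at this ⊢
    rw [show ((w.takeWhile (fun x => decide (x ≠ (i : ℕ) + 1))).filter
      (fun x => decide ((i : ℕ) + 1 < x))).length = code w ((i : ℕ) + 1) from rfl, this, hF]
    have hcond : 1 ≤ (i : ℕ) + 1 ∧ (i : ℕ) + 1 < n := ⟨by omega, by have := i.2; omega⟩
    simp only [dif_pos hcond]
    exact congrArg g (Fin.ext (by simp))


end SPermutahedron
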